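/- Let (G_n)_{n∈ℕ} be an inverse system of finite nilpotent groups with surjective transition maps and let G = lim← G_n be the inverse limit. If G is just-infinite (infinite and every nontrivial closed normal subgroup has finite index), then G is topologically finitely generated. -/

import Mathlib

namespace InvLim

variable {Gn : ℕ → Type*} [∀ n, Group (Gn n)]

/-- The inverse limit of an `ℕ`-indexed inverse system of groups with transition maps
`f n : G_{n+1} →* G_n`, realized as the subgroup of compatible sequences in the product. -/
def invLim (Gn : ℕ → Type*) [∀ n, Group (Gn n)] (f : ∀ n, Gn (n + 1) →* Gn n) :
    Subgroup (∀ n, Gn n) where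
  carrier := {x | ∀ n, f n (x (n + 1)) = x n}
  one_mem' := fun n => by simp
  mul_mem' := by
    intro x y hx hy n
    simp only [Pi.mul_apply, map_mul, hx n, hy n]
  inv_mem' := by
    intro x hx n
    simp only [Pi.inv_apply, map_inv, hx n]

/-- The canonical projection `π_n : lim← G_n → G_n`. -/
def plim (Gn : ℕ → Type*) [∀ n, Group (Gn n)] (f : ∀ n, Gn (n + 1) →* Gn n) (n : ℕ) :
    ↥(invLim Gn f) →* Gn n :=
  (Pi.evalMonoidHom Gn n).comp (invLim Gn f).subtype

/-- The congruence topology on the inverse limit: the topology induced from the product of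
the discrete topologies, for which the kernels `ker π_n` form a base of open neighborhoods
of the identity. -/
instance invLimTopology (Gn : ℕ → Type*) [∀ n, Group (Gn n)] (f : ∀ n, Gn (n + 1) →* Gn n) :
    TopologicalSpace ↥(invLim Gn f) :=
  TopologicalSpace.induced (Subtype.val) (@Pi.topologicalSpace ℕ Gn (fun _ => ⊥))

end InvLim

namespace InvLim

open scoped commutatorElement

section Aux

variable {Gn : ℕ → Type*} [∀ n, Group (Gn n)]

/-- Iterated transition maps `G_k →* G_m` for `m ≤ k`. -/
def fIter (f : ∀ n, Gn (n + 1) →* Gn n) : ∀ {m k : ℕ}, m ≤ k → (Gn k →* Gn m) :=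
  fun {m k} h => Nat.leRecOn h (fun {j} F => F.comp (f j)) (MonoidHom.id (Gn m))

lemma fIter_self (f : ∀ n, Gn (n + 1) →* Gn n) {m : ℕ} (h : m ≤ m) :
    fIter f h = MonoidHom.id (Gn m) := Nat.leRecOn_self _

lemma fIter_succ (f : ∀ n, Gn (n + 1) →* Gn n) {m k : ℕ} (h : m ≤ k) (h2 : m ≤ k + 1)
    (y : Gn (k + 1)) : fIter f h2 y = fIter f h (f k y) := by
  have : (fIter f h2 : Gn (k + 1) →* Gn m) = (fIter f h).comp (f k) :=
    Nat.leRecOn_succ h _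
  rw [this]; rfl

lemma fIter_comp_f (f : ∀ n, Gn (n + 1) →* Gn n) {m k : ℕ} (h : m + 1 ≤ k) (y : Gn k) :
    f m (fIter f h y) = fIter f (Nat.le_of_succ_le h) y := by
  induction k, h using Nat.le_induction with
  | base =>
    rw [fIter_self f (le_refl (m + 1)), fIter_succ f (le_refl m) (Nat.le_succ m) y,
      fIter_self f (le_refl m)]
    rfl
  | succ k hk ih =>
    rw [fIter_succ f hk (Nat.le_succ_of_le hk) y, ih (f k y),
      fIter_succ f (Nat.le_of_succ_le hk) (Nat.le_succ_of_le (Nat.le_of_succ_le hk)) y]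

lemma fIter_compat (f : ∀ n, Gn (n + 1) →* Gn n) {x : ∀ n, Gn n}
    (hx : ∀ n, f n (x (n + 1)) = x n) {m k : ℕ} (h : m ≤ k) : fIter f h (x k) = x m := by
  induction k, h using Nat.le_induction with
  | base => rw [fIter_self f (le_refl m)]; rfl
  | succ k hk ih => rw [fIter_succ f hk (Nat.le_succ_of_le hk), hx k, ih]

lemma plim_surjective (f : ∀ n, Gn (n + 1) →* Gn n) (hf : ∀ n, Function.Surjective (f n))
    (n : ℕ) : Function.Surjective (plim Gn f n) := by
  intro g
  let x : ∀ m, Gn m := fun m =>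
    Nat.rec (fIter f (Nat.zero_le n) g)
      (fun m xm => if h : m + 1 ≤ n then fIter f h g else Function.surjInv (hf m) xm) m
  have hle : ∀ (m : ℕ) (h : m ≤ n), x m = fIter f h g := by
    intro m h
    cases m with
    | zero => rfl
    | succ m =>
      show (if h' : m + 1 ≤ n then fIter f h' g else Function.surjInv (hf m) (x m)) = _
      rw [dif_pos h]
  have hcompat : ∀ m, f m (x (m + 1)) = x m := by
    intro m
    by_cases h : m + 1 ≤ n
    · rw [hle (m + 1) h, hle m (Nat.le_of_succ_le h)]
      exact fIter_comp_f f h g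
    · show f m (if h' : m + 1 ≤ n then fIter f h' g else Function.surjInv (hf m) (x m)) = x m
      rw [dif_neg h]
      exact Function.surjInv_eq (hf m) (x m)
  refine ⟨⟨x, hcompat⟩, ?_⟩
  show x n = g
  rw [hle n (le_refl n), fIter_self f (le_refl n)]
  rfl

/-- If `z` lies in the closure of a set `A` in the congruence topology, then every
projection of `z` is a projection of an element of `A`. -/
lemma exists_of_mem_closure (f : ∀ n, Gn (n + 1) →* Gn n) {A : Set ↥(invLim Gn f)}
    {z : ↥(invLim Gn f)} (hz : z ∈ closure A) (n : ℕ) :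
    ∃ w ∈ A, plim Gn f n w = plim Gn f n z := by
  letI : ∀ m, TopologicalSpace (Gn m) := fun _ => ⊥
  haveI : ∀ m, DiscreteTopology (Gn m) := fun _ => ⟨rfl⟩
  have hcont : Continuous (Subtype.val : ↥(invLim Gn f) → ∀ m, Gn m) :=
    continuous_induced_dom
  have hO : IsOpen {y : ↥(invLim Gn f) | (y : ∀ m, Gn m) n = (z : ∀ m, Gn m) n} := by
    have h1 : IsOpen {v : ∀ m, Gn m | v n = (z : ∀ m, Gn m) n} :=
      (continuous_apply n).isOpen_preimage {(z : ∀ m, Gn m) n} (isOpen_discrete _)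
    exact hcont.isOpen_preimage _ h1
  obtain ⟨w, hw1, hw2⟩ := mem_closure_iff.mp hz _ hO rfl
  exact ⟨w, hw2, hw1⟩

/-- A subgroup whose projections exhaust all projections is dense. -/
lemma dense_of_proj (f : ∀ n, Gn (n + 1) →* Gn n) (H : Subgroup ↥(invLim Gn f))
    (h : ∀ (n : ℕ) (y : ↥(invLim Gn f)), ∃ s ∈ H, plim Gn f n s = plim Gn f n y) :
    Dense (H : Set ↥(invLim Gn f)) := by
  letI : ∀ m, TopologicalSpace (Gn m) := fun _ => ⊥
  haveI : ∀ m, DiscreteTopology (Gn m) := fun _ => ⟨rfl⟩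
  intro y
  rw [mem_closure_iff]
  intro O hO hyO
  have hO' : @IsOpen _ (TopologicalSpace.induced (Subtype.val)
      (@Pi.topologicalSpace ℕ Gn (fun _ => ⊥))) O := hO
  obtain ⟨U, hU, rfl⟩ := isOpen_induced_iff.mp hO'
  have hU' : IsOpen U := hU
  obtain ⟨I, u, hu, hsub⟩ := isOpen_pi_iff.mp hU' (y : ∀ m, Gn m) hyO
  obtain ⟨s, hsH, hs⟩ := h (I.sup id) y
  refine ⟨s, ?_, hsH⟩
  show (s : ∀ m, Gn m) ∈ U
  apply hsub
  intro i hi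
  have hin : i ≤ I.sup id := Finset.le_sup (f := id) hi
  have h1 : fIter f hin ((s : ∀ m, Gn m) (I.sup id)) = (s : ∀ m, Gn m) i :=
    fIter_compat f s.2 hin
  have h2 : fIter f hin ((y : ∀ m, Gn m) (I.sup id)) = (y : ∀ m, Gn m) i :=
    fIter_compat f y.2 hin
  have hsn : (s : ∀ m, Gn m) (I.sup id) = (y : ∀ m, Gn m) (I.sup id) := hs
  have hsi : (s : ∀ m, Gn m) i = (y : ∀ m, Gn m) i := by rw [← h1, hsn, h2]
  rw [hsi]
  exact (hu i hi).2

/-- In a finite nilpotent group, a subgroup which together with the commutator subgroup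
generates the whole group is the whole group. -/
lemma eq_top_of_sup_commutator {K : Type*} [Group K] [Finite K] [Group.IsNilpotent K]
    (M : Subgroup K) (h : M ⊔ commutator K = ⊤) : M = ⊤ := by
  by_contra hM
  rcases (Finite.to_isCoatomic (α := Subgroup K)).eq_top_or_exists_le_coatom M with h1 | h1
  · exact hM h1
  obtain ⟨W, hW, hMW⟩ := h1
  haveI hWn : W.Normal :=
    Subgroup.NormalizerCondition.normal_of_coatom W (normalizerCondition_of_isNilpotent) hW
  -- every subgroup of the quotient is ⊥ or ⊤
  have hsub : ∀ P : Subgroup (K ⧸ W), P = ⊥ ∨ P = ⊤ := by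
    intro P
    have hker : (QuotientGroup.mk' W).ker = W := QuotientGroup.ker_mk' W
    have h1 : W ≤ P.comap (QuotientGroup.mk' W) := by
      intro w hw
      have hw1 : (QuotientGroup.mk' W) w = 1 := by
        have : w ∈ (QuotientGroup.mk' W).ker := by rw [hker]; exact hw
        exact MonoidHom.mem_ker.mp this
      show (QuotientGroup.mk' W) w ∈ P
      rw [hw1]
      exact P.one_mem
    have hPcomap : P = (P.comap (QuotientGroup.mk' W)).map (QuotientGroup.mk' W) :=
      (Subgroup.map_comap_eq_self_of_surjective (QuotientGroup.mk'_surjective W) P).symm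
    rcases eq_or_lt_of_le h1 with heq | hlt
    · left
      rw [hPcomap, ← heq, Subgroup.map_eq_bot_iff, hker]
    · right
      have htop : P.comap (QuotientGroup.mk' W) = ⊤ := hW.2 _ hlt
      rw [hPcomap, htop]
      exact Subgroup.map_top_of_surjective _ (QuotientGroup.mk'_surjective W)
  -- the quotient is commutative
  have hcomm : ∀ a b : K ⧸ W, Commute a b := by
    intro a b
    rcases hsub (Subgroup.zpowers a) with hz | hz
    · have ha : a = 1 := by
        have := Subgroup.mem_zpowers a
        rw [hz] at this
        exact this
      rw [ha]; exact Commute.one_left b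
    · have hb : b ∈ Subgroup.zpowers a := by rw [hz]; trivial
      obtain ⟨k, rfl⟩ := hb
      exact (Commute.refl a).zpow_right k
  -- hence the commutator subgroup is contained in W
  have hCW : commutator K ≤ W := by
    rw [commutator_def, Subgroup.commutator_le]
    intro g _ k _
    have h1 : (QuotientGroup.mk' W) ⁅g, k⁆ = 1 := by
      rw [map_commutatorElement]
      exact commutatorElement_eq_one_iff_commute.mpr (hcomm _ _)
    have h2 := MonoidHom.mem_ker.mpr h1
    rwa [QuotientGroup.ker_mk'] at h2
  have : (⊤ : Subgroup K) ≤ W := h ▸ sup_le hMW hCW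
  exact hW.1 (top_unique this)

end Aux

/-- If the inverse limit `G = lim← G_n` of an inverse system of finite
nilpotent groups with surjective transition maps is just-infinite (infinite and every
nontrivial closed normal subgroup has finite index), then `G` is topologically finitely
generated. -/
theorem statement_5 (Gn : ℕ → Type*) [∀ n, Group (Gn n)] [∀ n, Finite (Gn n)]
    (hnil : ∀ n, Group.IsNilpotent (Gn n))
    (f : ∀ n, Gn (n + 1) →* Gn n) (hf : ∀ n, Function.Surjective (f n))
    (hinf : Infinite ↥(invLim Gn f))
    (hji : ∀ N : Subgroup ↥(invLim Gn f), N.Normal →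
      IsClosed (N : Set ↥(invLim Gn f)) → N ≠ ⊥ → N.index ≠ 0) :
    ∃ S : Set ↥(invLim Gn f), S.Finite ∧
      Dense ((Subgroup.closure S : Subgroup ↥(invLim Gn f)) : Set ↥(invLim Gn f)) := by
  classical
  letI : ∀ m, TopologicalSpace (Gn m) := fun _ => ⊥
  haveI : ∀ m, DiscreteTopology (Gn m) := fun _ => ⟨rfl⟩
  haveI : ∀ m, IsTopologicalGroup (Gn m) := fun m =>
    { continuous_mul := continuous_of_discreteTopology
      continuous_inv := continuous_of_discreteTopology }
  haveI htg : @IsTopologicalGroup ↥(invLim Gn f) (invLimTopology Gn f) _ :=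
    (inferInstance : @IsTopologicalGroup ↥(invLim Gn f) instTopologicalSpaceSubtype _)
  by_cases hD : (commutator ↥(invLim Gn f)).topologicalClosure = ⊥
  · -- abelian case
    have hcommut : ∀ a b : ↥(invLim Gn f), a * b = b * a := by
      intro a b
      have h1 : ⁅a, b⁆ ∈ commutator ↥(invLim Gn f) :=
        Subgroup.commutator_mem_commutator (Subgroup.mem_top a) (Subgroup.mem_top b)
      have h2 : ⁅a, b⁆ ∈ (commutator ↥(invLim Gn f)).topologicalClosure :=
        Subgroup.le_topologicalClosure _ h1
      rw [hD] at h2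
      exact commutatorElement_eq_one_iff_commute.mp (Subgroup.mem_bot.mp h2)
    haveI := hinf
    obtain ⟨x, hx⟩ := exists_ne (1 : ↥(invLim Gn f))
    have hZnormal : (Subgroup.closure ({x} : Set ↥(invLim Gn f))).topologicalClosure.Normal := by
      constructor
      intro z hz g
      have hgz : g * z * g⁻¹ = z := by rw [hcommut g z]; group
      rw [hgz]; exact hz
    have hZbot : (Subgroup.closure ({x} : Set ↥(invLim Gn f))).topologicalClosure ≠ ⊥ := by
      intro hbot
      have hxZ : x ∈ (Subgroup.closure ({x} : Set ↥(invLim Gn f))).topologicalClosure :=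
        Subgroup.le_topologicalClosure _ (Subgroup.subset_closure rfl)
      rw [hbot] at hxZ
      exact hx (Subgroup.mem_bot.mp hxZ)
    have hidx := hji _ hZnormal (Subgroup.isClosed_topologicalClosure _) hZbot
    haveI hfinidx : (Subgroup.closure ({x} : Set ↥(invLim Gn f))).topologicalClosure.FiniteIndex :=
      ⟨hidx⟩
    haveI hfin : Finite
        (↥(invLim Gn f) ⧸ (Subgroup.closure ({x} : Set ↥(invLim Gn f))).topologicalClosure) :=
      Subgroup.finite_quotient_of_finiteIndex
    refine ⟨insert x (Set.range (fun q :
        ↥(invLim Gn f) ⧸ (Subgroup.closure ({x} : Set ↥(invLim Gn f))).topologicalClosure =>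
        q.out)), (Set.finite_range _).insert x, ?_⟩
    apply dense_of_proj
    intro n y
    set q : ↥(invLim Gn f) ⧸ (Subgroup.closure ({x} : Set ↥(invLim Gn f))).topologicalClosure :=
      QuotientGroup.mk y with hq
    have hqt : (QuotientGroup.mk q.out : ↥(invLim Gn f) ⧸
        (Subgroup.closure ({x} : Set ↥(invLim Gn f))).topologicalClosure) = QuotientGroup.mk y :=
      QuotientGroup.out_eq' q
    have hty : q.out⁻¹ * y ∈ (Subgroup.closure ({x} : Set ↥(invLim Gn f))).topologicalClosure :=
      QuotientGroup.eq.mp hqt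
    have hzc : q.out⁻¹ * y ∈
        closure ((Subgroup.closure ({x} : Set ↥(invLim Gn f)) : Subgroup _) :
          Set ↥(invLim Gn f)) := by
      rw [← Subgroup.topologicalClosure_coe]
      exact hty
    obtain ⟨w, hw, hwp⟩ := exists_of_mem_closure f hzc n
    refine ⟨q.out * w, ?_, ?_⟩
    · apply Subgroup.mul_mem
      · exact Subgroup.subset_closure (Set.mem_insert_iff.mpr (Or.inr ⟨q, rfl⟩))
      · exact Subgroup.closure_mono (Set.singleton_subset_iff.mpr (Set.mem_insert x _)) hw
    · rw [map_mul, hwp, ← map_mul, mul_inv_cancel_left]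
  · -- nonabelian case
    have hDnormal : (commutator ↥(invLim Gn f)).topologicalClosure.Normal :=
      Subgroup.is_normal_topologicalClosure _
    have hidx := hji _ hDnormal (Subgroup.isClosed_topologicalClosure _) hD
    haveI hfinidx : (commutator ↥(invLim Gn f)).topologicalClosure.FiniteIndex := ⟨hidx⟩
    haveI hfin : Finite (↥(invLim Gn f) ⧸ (commutator ↥(invLim Gn f)).topologicalClosure) :=
      Subgroup.finite_quotient_of_finiteIndex
    refine ⟨Set.range (fun q :
        ↥(invLim Gn f) ⧸ (commutator ↥(invLim Gn f)).topologicalClosure => q.out),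
      Set.finite_range _, ?_⟩
    apply dense_of_proj
    intro n y
    haveI : Group.IsNilpotent (Gn n) := hnil n
    have hMtop : (Subgroup.closure (Set.range (fun q :
        ↥(invLim Gn f) ⧸ (commutator ↥(invLim Gn f)).topologicalClosure => q.out))).map
          (plim Gn f n) ⊔ commutator (Gn n) = ⊤ := by
      rw [eq_top_iff]
      intro g _
      obtain ⟨z, rfl⟩ := plim_surjective f hf n g
      set q : ↥(invLim Gn f) ⧸ (commutator ↥(invLim Gn f)).topologicalClosure :=
        QuotientGroup.mk z with hq
      have hqt : (QuotientGroup.mk q.out : ↥(invLim Gn f) ⧸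
          (commutator ↥(invLim Gn f)).topologicalClosure) = QuotientGroup.mk z :=
        QuotientGroup.out_eq' q
      have hty : q.out⁻¹ * z ∈ (commutator ↥(invLim Gn f)).topologicalClosure :=
        QuotientGroup.eq.mp hqt
      have hzc : q.out⁻¹ * z ∈
          closure ((commutator ↥(invLim Gn f) : Subgroup _) : Set ↥(invLim Gn f)) := by
        rw [← Subgroup.topologicalClosure_coe]
        exact hty
      obtain ⟨c, hc, hcp⟩ := exists_of_mem_closure f hzc n
      have hdec : plim Gn f n z = plim Gn f n q.out * plim Gn f n c := by
        rw [hcp, ← map_mul, mul_inv_cancel_left]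
      rw [hdec]
      apply Subgroup.mul_mem
      · apply Subgroup.mem_sup_left
        exact Subgroup.mem_map_of_mem _ (Subgroup.subset_closure ⟨q, rfl⟩)
      · apply Subgroup.mem_sup_right
        have hmap : (commutator ↥(invLim Gn f)).map (plim Gn f n) ≤ commutator (Gn n) := by
          rw [commutator_def, Subgroup.map_commutator, commutator_def]
          exact Subgroup.commutator_mono le_top le_top
        exact hmap (Subgroup.mem_map_of_mem _ hc)
    have hM := eq_top_of_sup_commutator _ hMtop
    have hy : plim Gn f n y ∈ (Subgroup.closure (Set.range (fun q :
        ↥(invLim Gn f) ⧸ (commutator ↥(invLim Gn f)).topologicalClosure => q.out))).map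
          (plim Gn f n) := by
      rw [hM]; trivial
    obtain ⟨s, hs, hsp⟩ := Subgroup.mem_map.mp hy
    exact ⟨s, hs, hsp⟩

end InvLim
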